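/- There exist three lattices Λ₀, Λ₁, Λ₂ in ℝ² of the same covolume which admit no common fundamental domain: specifically, for Λ₀ = (2ℤ)×ℤ, Λ₁ = ℤ×(2ℤ), and Λ₂ = {(k,l) ∈ ℤ² : k ≡ l (mod 2)}, there is no set Ω ⊆ ℝ² such that for almost every x ∈ ℝ², the coset x + Λ_i contains exactly one point of Ω for each i = 0, 1, 2. -/
import Mathlib


open MeasureTheory

namespace ThreeLatticesAux

/-- Points of `ℝ × ℝ` with integer coordinates satisfying a condition `C`. -/
def P (C : ℤ → ℤ → Prop) (q : ℝ × ℝ) : Prop :=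
  ∃ k l : ℤ, q = ((k : ℝ), (l : ℝ)) ∧ C k l

/-- The even-even condition. -/
def E (k l : ℤ) : Prop := 2 ∣ k ∧ 2 ∣ l

lemma P_congr {C C' : ℤ → ℤ → Prop} (h : ∀ k l, C k l ↔ C' k l) (q : ℝ × ℝ) :
    P C q ↔ P C' q := by
  unfold P
  exact exists_congr fun k => exists_congr fun l => and_congr_right fun _ => h k l

lemma P_or (C C' : ℤ → ℤ → Prop) (q : ℝ × ℝ) :
    P (fun k l => C k l ∨ C' k l) q ↔ P C q ∨ P C' q := by
  constructor
  · rintro ⟨k, l, rfl, hc | hc⟩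
    · exact Or.inl ⟨k, l, rfl, hc⟩
    · exact Or.inr ⟨k, l, rfl, hc⟩
  · rintro (⟨k, l, rfl, hc⟩ | ⟨k, l, rfl, hc⟩)
    · exact ⟨k, l, rfl, Or.inl hc⟩
    · exact ⟨k, l, rfl, Or.inr hc⟩

lemma P_inj {C C' : ℤ → ℤ → Prop} {q : ℝ × ℝ} (h : P C q) (h' : P C' q) :
    ∃ k l : ℤ, C k l ∧ C' k l := by
  obtain ⟨k, l, rfl, hc⟩ := h
  obtain ⟨k', l', he, hc'⟩ := h'
  rw [Prod.mk.injEq] at he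
  have hk : k' = k := by exact_mod_cast he.1.symm
  have hl : l' = l := by exact_mod_cast he.2.symm
  exact ⟨k, l, hc, by rwa [hk, hl] at hc'⟩

lemma P_sub (C : ℤ → ℤ → Prop) (a b : ℤ) (q : ℝ × ℝ) :
    P C (q - ((a : ℝ), (b : ℝ))) ↔ P (fun k l => C (k - a) (l - b)) q := by
  constructor
  · rintro ⟨k, l, he, hc⟩
    refine ⟨k + a, l + b, ?_, ?_⟩
    · rw [sub_eq_iff_eq_add] at he
      rw [he, Prod.mk_add_mk]
      push_cast
      ring_nf
    · simpa using hc
  · rintro ⟨k, l, rfl, hc⟩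
    refine ⟨k - a, l - b, ?_, hc⟩
    rw [Prod.mk_sub_mk]
    push_cast
    ring_nf

/-- Membership in `Λ0` in terms of `P`. -/
lemma mem0 (q : ℝ × ℝ) :
    (∃ k l : ℤ, q = (((2 * k : ℤ) : ℝ), ((l : ℤ) : ℝ))) ↔ P (fun k _ => 2 ∣ k) q := by
  constructor
  · rintro ⟨k, l, rfl⟩
    exact ⟨2 * k, l, by push_cast; rfl, ⟨k, rfl⟩⟩
  · rintro ⟨k, l, rfl, ⟨m, rfl⟩⟩
    exact ⟨m, l, by push_cast; rfl⟩

/-- Membership in `Λ1` in terms of `P`. -/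
lemma mem1 (q : ℝ × ℝ) :
    (∃ k l : ℤ, q = (((k : ℤ) : ℝ), ((2 * l : ℤ) : ℝ))) ↔ P (fun _ l => 2 ∣ l) q := by
  constructor
  · rintro ⟨k, l, rfl⟩
    exact ⟨k, 2 * l, by push_cast; rfl, ⟨l, rfl⟩⟩
  · rintro ⟨k, l, rfl, ⟨m, rfl⟩⟩
    exact ⟨k, m, by push_cast; rfl⟩

/-- Membership in `Λ2` in terms of `P`. -/
lemma mem2 (q : ℝ × ℝ) :
    (∃ k l : ℤ, k % 2 = l % 2 ∧ q = (((k : ℤ) : ℝ), ((l : ℤ) : ℝ))) ↔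
      P (fun k l => k % 2 = l % 2) q := by
  constructor
  · rintro ⟨k, l, h, rfl⟩
    exact ⟨k, l, rfl, h⟩
  · rintro ⟨k, l, rfl, h⟩
    exact ⟨k, l, h, rfl⟩

/-- The key exclusion step: if `Ω` tiles with respect to the lattice described by `Ci`,
and `Ci` splits as the even-even sublattice union its translate by `(a, b)`, then having a
point of `Ω` in `x + 2ℤ×2ℤ` is equivalent to not having one in `x + (a,b) + 2ℤ×2ℤ`. -/
lemma xor_step (Ω : Set (ℝ × ℝ)) (Ci : ℤ → ℤ → Prop) (a b : ℤ) (x : ℝ × ℝ)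
    (hsplit : ∀ k l, Ci k l ↔ (E k l ∨ E (k - a) (l - b)))
    (hdisj : ∀ k l, ¬ (E k l ∧ E (k - a) (l - b)))
    (hA : ∃! p, p ∈ Ω ∧ P Ci (p - x)) :
    (∃ p, p ∈ Ω ∧ P E (p - x)) ↔
      ¬ (∃ p, p ∈ Ω ∧ P E (p - (x + ((a : ℝ), (b : ℝ))))) := by
  obtain ⟨p, ⟨hpΩ, hpC⟩, hun⟩ := hA
  have hsub : ∀ r : ℝ × ℝ, r - (x + ((a : ℝ), (b : ℝ))) = (r - x) - ((a : ℝ), (b : ℝ)) := by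
    intro r; ring
  have hCiff : ∀ q : ℝ × ℝ, P Ci q ↔ P E q ∨ P E (q - ((a : ℝ), (b : ℝ))) := by
    intro q
    rw [P_congr hsplit, P_or, P_sub]
  constructor
  · rintro ⟨q, hqΩ, hqE⟩ ⟨r, hrΩ, hrE⟩
    rw [hsub r] at hrE
    have hq : q = p := hun q ⟨hqΩ, (hCiff _).2 (Or.inl hqE)⟩
    have hr : r = p := hun r ⟨hrΩ, (hCiff _).2 (Or.inr hrE)⟩
    subst hq; subst hr
    rw [P_sub] at hrE
    obtain ⟨k, l, h1, h2⟩ := P_inj hqE hrE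
    exact hdisj k l ⟨h1, h2⟩
  · intro hnB
    rcases (hCiff _).1 hpC with h | h
    · exact ⟨p, hpΩ, h⟩
    · exact absurd ⟨p, hpΩ, by rw [hsub p]; exact h⟩ hnB

end ThreeLatticesAux

open ThreeLatticesAux

theorem three_lattices_no_common_tile :
    let Λ0 : Set (ℝ × ℝ) := {p | ∃ k l : ℤ, p = (((2 * k : ℤ) : ℝ), ((l : ℤ) : ℝ))}
    let Λ1 : Set (ℝ × ℝ) := {p | ∃ k l : ℤ, p = (((k : ℤ) : ℝ), ((2 * l : ℤ) : ℝ))}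
    let Λ2 : Set (ℝ × ℝ) := {p | ∃ k l : ℤ, k % 2 = l % 2 ∧ p = (((k : ℤ) : ℝ), ((l : ℤ) : ℝ))}
    ¬ ∃ Ω : Set (ℝ × ℝ), ∀ᵐ x : ℝ × ℝ ∂volume,
        (∃! p, p ∈ Ω ∧ p - x ∈ Λ0) ∧ (∃! p, p ∈ Ω ∧ p - x ∈ Λ1) ∧
          (∃! p, p ∈ Ω ∧ p - x ∈ Λ2) := by
  intro Λ0 Λ1 Λ2
  rintro ⟨Ω, hΩ⟩
  -- translate the a.e. statement by (0, 1)
  have hmp : MeasurePreserving (fun x : ℝ × ℝ => x + ((0 : ℝ), (1 : ℝ))) volume volume :=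
    measurePreserving_add_right volume _
  have h2 := hmp.quasiMeasurePreserving.ae hΩ
  have hne : Filter.NeBot (ae (volume : Measure (ℝ × ℝ))) := inferInstance
  obtain ⟨x, ⟨hx0, hx1, hx2⟩, hy0, hy1, hy2⟩ := (hΩ.and h2).exists
  clear hΩ h2 hmp hy0 hy2
  -- convert to statements about P
  have conv0 : ∀ z : ℝ × ℝ, (∃! p, p ∈ Ω ∧ p - z ∈ Λ0) →
      ∃! p, p ∈ Ω ∧ P (fun k _ => 2 ∣ k) (p - z) := fun z h =>
    (existsUnique_congr fun p => and_congr_right fun _ => mem0 (p - z)).1 h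
  have conv1 : ∀ z : ℝ × ℝ, (∃! p, p ∈ Ω ∧ p - z ∈ Λ1) →
      ∃! p, p ∈ Ω ∧ P (fun _ l => 2 ∣ l) (p - z) := fun z h =>
    (existsUnique_congr fun p => and_congr_right fun _ => mem1 (p - z)).1 h
  have conv2 : ∀ z : ℝ × ℝ, (∃! p, p ∈ Ω ∧ p - z ∈ Λ2) →
      ∃! p, p ∈ Ω ∧ P (fun k l => k % 2 = l % 2) (p - z) := fun z h =>
    (existsUnique_congr fun p => and_congr_right fun _ => mem2 (p - z)).1 h
  -- the three exclusion steps
  have s0 := xor_step Ω _ 0 1 x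
    (fun k l => by unfold E; constructor <;> intro h <;> omega)
    (fun k l => by unfold E; omega) (conv0 x hx0)
  have s2 := xor_step Ω _ 1 1 x
    (fun k l => by unfold E; constructor <;> intro h <;> omega)
    (fun k l => by unfold E; omega) (conv2 x hx2)
  have s1 := xor_step Ω _ 1 0 (x + ((0 : ℝ), (1 : ℝ)))
    (fun k l => by unfold E; constructor <;> intro h <;> omega)
    (fun k l => by unfold E; omega) (conv1 _ hy1)
  have hvec : x + ((0 : ℝ), (1 : ℝ)) + ((1 : ℝ), (0 : ℝ)) = x + ((1 : ℝ), (1 : ℝ)) := by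
    rw [add_assoc]
    congr 1
    rw [Prod.mk_add_mk]
    norm_num
  push_cast at s0 s1 s2
  rw [hvec] at s1
  by_cases hA : ∃ p ∈ Ω, P E (p - x)
  · exact (s0.1 hA) (s1.2 (s2.1 hA))
  · have hBv : ∃ p ∈ Ω, P E (p - (x + ((0 : ℝ), (1 : ℝ)))) :=
      not_not.1 fun h => hA (s0.2 h)
    exact hA (s2.2 (s1.1 hBv))
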